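/- Let a < b, let n ∈ ℕ with n ≥ 2, and let α : [a,b] × [a,b] → ℝ be measurable with 1/n < α(t,τ) < 1 for all t, τ ∈ [a,b]. Then ∫_a^b ∫_a^t (t−τ)^{α(t,τ)−1} / Γ(α(t,τ)) dτ dt < (b−a) · ((b+a)/2 − 1 + n − a). -/

import Mathlib

open MeasureTheory Set intervalIntegral

private lemma measurable_realGamma : Measurable Real.Gamma := by
  have h1 : Measurable fun z : ℂ => (Complex.Gamma z)⁻¹ :=
    Complex.differentiable_one_div_Gamma.continuous.measurable
  have h2 : Measurable fun x : ℝ => Complex.Gamma (x : ℂ) := by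
    have := (h1.comp Complex.measurable_ofReal).inv
    convert this using 1; funext x; simp
  have h3 : Real.Gamma = fun x : ℝ => (Complex.Gamma (x : ℂ)).re := by
    funext x
    rw [Complex.Gamma_ofReal, Complex.ofReal_re]
  rw [h3]
  exact Complex.measurable_re.comp h2

private lemma one_le_Gamma_aux {x : ℝ} (h0 : 0 < x) (h1 : x ≤ 1) : 1 ≤ Real.Gamma x := by
  rcases eq_or_lt_of_le h1 with h | h
  · rw [h, Real.Gamma_one]
  · have hx2 : (0:ℝ) < 2 - x := by linarith
    have hx3 : (0:ℝ) ≤ 1 - x := by linarith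
    have hG2 : Real.Gamma 2 = 1 := by
      rw [show (2:ℝ) = 1 + 1 by norm_num, Real.Gamma_add_one one_ne_zero, Real.Gamma_one,
        one_mul]
    have key := Real.convexOn_Gamma.2 (mem_Ioi.mpr h0) (mem_Ioi.mpr (by norm_num : (0:ℝ) < 2))
      (show (0:ℝ) ≤ 1/(2-x) by positivity) (show (0:ℝ) ≤ (1-x)/(2-x) by positivity)
      (by field_simp; ring)
    have hpt : (1/(2-x)) • x + ((1-x)/(2-x)) • (2:ℝ) = 1 := by
      rw [smul_eq_mul, smul_eq_mul, div_mul_eq_mul_div, div_mul_eq_mul_div, ← add_div,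
        div_eq_one_iff_eq hx2.ne']
      ring
    rw [hpt, Real.Gamma_one, smul_eq_mul, smul_eq_mul, hG2, mul_one] at key
    have key2 := mul_le_mul_of_nonneg_left key hx2.le
    field_simp at key2
    linarith

private lemma nmul_rpow_le_aux (n : ℕ) (hn : 2 ≤ n) {x : ℝ} (hx : 0 ≤ x) :
    (n : ℝ) * x ^ (1 / (n : ℝ)) ≤ x + n - 1 := by
  have hn0 : n ≠ 0 := by omega
  set y : ℝ := x ^ (1 / (n : ℝ)) with hy
  have hy0 : 0 ≤ y := Real.rpow_nonneg hx _
  have hyn : y ^ n = x := by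
    rw [hy, one_div]; exact Real.rpow_inv_natCast_pow hx hn0
  have h := one_add_mul_le_pow (a := y - 1) (by linarith) n
  rw [show (1:ℝ) + (y - 1) = y by ring] at h
  have hnn : (1:ℝ) ≤ (n:ℝ) := by exact_mod_cast Nat.one_le_of_lt hn
  nlinarith [h, hyn]

private lemma nmul_rpow_lt_aux (n : ℕ) (hn : 2 ≤ n) {x : ℝ} (hx : 0 ≤ x) (hx1 : x < 1) :
    (n : ℝ) * x ^ (1 / (n : ℝ)) < x + n - 1 := by
  have hn0 : n ≠ 0 := by omega
  have hnR : (1:ℝ) < (n:ℝ) := by exact_mod_cast Nat.lt_of_lt_of_le one_lt_two hn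
  set y : ℝ := x ^ (1 / (n : ℝ)) with hy
  have hy0 : 0 ≤ y := Real.rpow_nonneg hx _
  have hy1 : y < 1 := Real.rpow_lt_one hx hx1 (by positivity)
  have hyn : y ^ n = x := by
    rw [hy, one_div]; exact Real.rpow_inv_natCast_pow hx hn0
  have h := one_add_mul_self_lt_rpow_one_add (s := y - 1) (by linarith)
    (by intro hc; apply absurd (sub_eq_zero.mp hc); intro h'; rw [h'] at hy1; linarith)
    (p := (n : ℝ)) hnR
  rw [show (1:ℝ) + (y - 1) = y by ring, Real.rpow_natCast] at h
  nlinarith [h, hyn]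

/-- Joint integral bound for the kernel of the left Riemann–Liouville integral of
variable order `α` with `1/n < α(t,τ) < 1` (`n ≥ 2`):
`∫_a^b ∫_a^t (t−τ)^(α(t,τ)−1)/Γ(α(t,τ)) dτ dt < (b−a)·((b+a)/2 − 1 + n − a)`. -/
theorem kernel_double_integral_bound (a b : ℝ) (hab : a < b) (n : ℕ) (hn : 2 ≤ n)
    (α : ℝ → ℝ → ℝ) (hαm : Measurable (Function.uncurry α))
    (hα : ∀ t ∈ Set.Icc a b, ∀ τ ∈ Set.Icc a b, 1 / (n : ℝ) < α t τ ∧ α t τ < 1) :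
    (∫ t in a..b, ∫ τ in a..t, (t - τ) ^ (α t τ - 1) / Real.Gamma (α t τ)) <
      (b - a) * ((b + a) / 2 - 1 + (n : ℝ) - a) := by
  have hnR : (2:ℝ) ≤ (n:ℝ) := by exact_mod_cast hn
  have hn0 : (0:ℝ) < n := by linarith
  have hcpos : (0:ℝ) < 1/(n:ℝ) := by positivity
  have hchalf : 1/(n:ℝ) ≤ 1/2 := by
    apply one_div_le_one_div_of_le <;> linarith
  set c : ℝ := 1 / (n:ℝ) - 1 with hc
  have hc0 : (-1:ℝ) < c := by simp only [hc]; linarith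
  have hclt : c < 0 := by simp only [hc]; linarith
  have hαu : Measurable fun p : ℝ × ℝ => α p.1 p.2 := hαm
  set K : ℝ → ℝ → ℝ := fun t τ =>
    (if t - τ ≤ 0 then 0 else Real.exp (Real.log (t - τ) * (α t τ - 1))) / Real.Gamma (α t τ)
    with hKdef
  -- joint measurability of `K`
  have hKm : Measurable (fun p : ℝ × ℝ => K p.1 p.2) := by
    apply Measurable.div
    · apply Measurable.ite
      · exact measurableSet_le (measurable_fst.sub measurable_snd) measurable_const
      · exact measurable_const
      · exact Real.measurable_exp.comp
          ((Real.measurable_log.comp (measurable_fst.sub measurable_snd)).mul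
            (hαu.sub measurable_const))
    · exact measurable_realGamma.comp hαu
  -- `K` agrees with the original integrand on the region of interest
  have hKeq : ∀ t ∈ Icc a b, ∀ τ ∈ Icc a t,
      (t - τ) ^ (α t τ - 1) / Real.Gamma (α t τ) = K t τ := by
    intro t ht τ hτ
    have hτab : τ ∈ Icc a b := ⟨hτ.1, hτ.2.trans ht.2⟩
    obtain ⟨hα1, hα2⟩ := hα t ht τ hτab
    rcases lt_or_eq_of_le hτ.2 with h | h
    · have hpos : 0 < t - τ := by linarith
      simp only [hKdef, if_neg (not_le.mpr hpos)]
      rw [Real.rpow_def_of_pos hpos]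
    · have h0 : t - τ = 0 := by rw [h]; ring
      simp only [hKdef, h0, if_pos le_rfl]
      rw [Real.zero_rpow (sub_ne_zero.mpr (ne_of_lt hα2))]
  -- basic pointwise facts about `K`
  have hK0 : ∀ t ∈ Icc a b, ∀ τ ∈ Icc a b, 0 ≤ K t τ := by
    intro t ht τ hτ
    obtain ⟨hα1, _⟩ := hα t ht τ hτ
    have hΓ : 0 < Real.Gamma (α t τ) := Real.Gamma_pos_of_pos (lt_trans hcpos hα1)
    apply div_nonneg _ hΓ.le
    split
    · exact le_rfl
    · exact (Real.exp_pos _).le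
  have hΓ1 : ∀ t ∈ Icc a b, ∀ τ ∈ Icc a b, 1 ≤ Real.Gamma (α t τ) := by
    intro t ht τ hτ
    obtain ⟨hα1, hα2⟩ := hα t ht τ hτ
    exact one_le_Gamma_aux (lt_trans hcpos hα1) hα2.le
  have hKle1 : ∀ t ∈ Icc a b, ∀ τ ∈ Icc a b, τ ≤ t → t - τ ≤ 1 → K t τ ≤ (t - τ) ^ c := by
    intro t ht τ hτ hle hs1
    obtain ⟨hα1, hα2⟩ := hα t ht τ hτ
    rcases eq_or_lt_of_le hle with h | h
    · have h0 : t - τ = 0 := by rw [h]; ring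
      simp only [hKdef, h0, if_pos le_rfl, zero_div]
      rw [Real.zero_rpow hclt.ne]
    · have hpos : 0 < t - τ := by linarith
      simp only [hKdef, if_neg (not_le.mpr hpos)]
      rw [← Real.rpow_def_of_pos hpos]
      calc (t - τ) ^ (α t τ - 1) / Real.Gamma (α t τ) ≤ (t - τ) ^ (α t τ - 1) :=
            div_le_self (Real.rpow_nonneg hpos.le _) (hΓ1 t ht τ hτ)
        _ ≤ (t - τ) ^ c :=
            Real.rpow_le_rpow_of_exponent_ge hpos hs1 (by simp only [hc]; linarith)
  have hKle2 : ∀ t ∈ Icc a b, ∀ τ ∈ Icc a b, 1 ≤ t - τ → K t τ ≤ 1 := by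
    intro t ht τ hτ hs1
    obtain ⟨hα1, hα2⟩ := hα t ht τ hτ
    have hpos : 0 < t - τ := by linarith
    simp only [hKdef, if_neg (not_le.mpr hpos)]
    rw [← Real.rpow_def_of_pos hpos]
    calc (t - τ) ^ (α t τ - 1) / Real.Gamma (α t τ) ≤ (t - τ) ^ (α t τ - 1) :=
          div_le_self (Real.rpow_nonneg hpos.le _) (hΓ1 t ht τ hτ)
      _ ≤ 1 := Real.rpow_le_one_of_one_le_of_nonpos hs1 (by linarith)
  -- the key inner estimate
  have key : ∀ t ∈ Ioc a b, (∫ τ in a..t, K t τ) ≤ t - a + (n:ℝ) - 1 ∧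
      (t < a + 1 → (∫ τ in a..t, K t τ) < t - a + (n:ℝ) - 1) := by
    intro t ht
    have htIcc : t ∈ Icc a b := ⟨ht.1.le, ht.2⟩
    have hat : a ≤ t := ht.1.le
    have hKtm : Measurable (K t) := hKm.comp (measurable_const.prodMk measurable_id)
    have hgint : ∀ m : ℝ, IntervalIntegrable (fun τ => (t - τ) ^ c) volume m t := by
      intro m
      have h1 : IntervalIntegrable (fun s : ℝ => s ^ c) volume (t - m) (t - t) :=
        intervalIntegrable_rpow' hc0
      simpa using h1.comp_sub_left t
    have hcomp : ∀ m : ℝ, m ≤ t →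
        (∫ τ in m..t, (t - τ) ^ c) = (n:ℝ) * (t - m) ^ (1/(n:ℝ)) := by
      intro m hm
      rw [intervalIntegral.integral_comp_sub_left (fun s => s ^ c) t, sub_self,
        integral_rpow (Or.inl hc0), Real.zero_rpow (by simp only [hc]; intro hcc; linarith),
        sub_zero, show c + 1 = 1/(n:ℝ) by simp only [hc]; ring, one_div, div_eq_mul_inv, inv_inv, mul_comm]
    rcases le_or_gt t (a + 1) with hcase | hcase
    · -- t - a ≤ 1 : compare with (t - τ)^c on all of [a, t]
      have hbd : ∀ τ ∈ Icc a t, K t τ ≤ (t - τ) ^ c := by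
        intro τ hτ
        exact hKle1 t htIcc τ ⟨hτ.1, hτ.2.trans htIcc.2⟩ hτ.2 (by linarith [hτ.1])
      have hKint : IntervalIntegrable (K t) volume a t := by
        apply (hgint a).mono_fun hKtm.aestronglyMeasurable
        rw [uIoc_of_le hat]
        refine (ae_restrict_iff' measurableSet_Ioc).mpr (ae_of_all _ fun τ hτ => ?_)
        have hτab : τ ∈ Icc a b := ⟨hτ.1.le, hτ.2.trans htIcc.2⟩
        simp only [Real.norm_eq_abs]
        rw [abs_of_nonneg (hK0 t htIcc τ hτab),
          abs_of_nonneg (Real.rpow_nonneg (by linarith [hτ.2]) _)]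
        exact hbd τ ⟨hτ.1.le, hτ.2⟩
      have h1 : (∫ τ in a..t, K t τ) ≤ ∫ τ in a..t, (t - τ) ^ c :=
        intervalIntegral.integral_mono_on hat hKint (hgint a) hbd
      rw [hcomp a hat] at h1
      constructor
      · have h2 := nmul_rpow_le_aux n hn (x := t - a) (by linarith)
        linarith
      · intro hlt
        have h2 := nmul_rpow_lt_aux n hn (x := t - a) (by linarith) (by linarith)
        linarith
    · -- a + 1 < t : split at t - 1
      have hm1 : a ≤ t - 1 := by linarith
      have hm2 : t - 1 ≤ t := by linarith
      have hb1 : ∀ τ ∈ Icc a (t - 1), K t τ ≤ 1 := by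
        intro τ hτ
        exact hKle2 t htIcc τ ⟨hτ.1, by linarith [hτ.2, htIcc.2]⟩ (by linarith [hτ.2])
      have hb2 : ∀ τ ∈ Icc (t - 1) t, K t τ ≤ (t - τ) ^ c := by
        intro τ hτ
        exact hKle1 t htIcc τ ⟨by linarith [hτ.1], hτ.2.trans htIcc.2⟩ hτ.2
          (by linarith [hτ.1])
      have hKint1 : IntervalIntegrable (K t) volume a (t - 1) := by
        apply (_root_.intervalIntegrable_const (μ := volume) (c := (1:ℝ)) (a := a)
          (b := t - 1)).mono_fun hKtm.aestronglyMeasurable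
        rw [uIoc_of_le hm1]
        refine (ae_restrict_iff' measurableSet_Ioc).mpr (ae_of_all _ fun τ hτ => ?_)
        have hτab : τ ∈ Icc a b := ⟨hτ.1.le, by linarith [hτ.2, htIcc.2]⟩
        simp only [Real.norm_eq_abs]
        rw [abs_of_nonneg (hK0 t htIcc τ hτab), abs_one]
        exact hb1 τ ⟨hτ.1.le, hτ.2⟩
      have hKint2 : IntervalIntegrable (K t) volume (t - 1) t := by
        apply (hgint (t - 1)).mono_fun hKtm.aestronglyMeasurable
        rw [uIoc_of_le hm2]
        refine (ae_restrict_iff' measurableSet_Ioc).mpr (ae_of_all _ fun τ hτ => ?_)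
        have hτab : τ ∈ Icc a b := ⟨by linarith [hτ.1], hτ.2.trans htIcc.2⟩
        simp only [Real.norm_eq_abs]
        rw [abs_of_nonneg (hK0 t htIcc τ hτab),
          abs_of_nonneg (Real.rpow_nonneg (by linarith [hτ.2]) _)]
        exact hb2 τ ⟨hτ.1.le, hτ.2⟩
      have hsplit : (∫ τ in a..t, K t τ)
          = (∫ τ in a..(t - 1), K t τ) + ∫ τ in (t - 1)..t, K t τ :=
        (intervalIntegral.integral_add_adjacent_intervals hKint1 hKint2).symm
      have e1 : (∫ τ in a..(t - 1), K t τ) ≤ t - 1 - a := by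
        have := intervalIntegral.integral_mono_on hm1 hKint1
          (_root_.intervalIntegrable_const (c := (1:ℝ))) hb1
        simpa using this
      have e2 : (∫ τ in (t - 1)..t, K t τ) ≤ (n:ℝ) := by
        have h3 := intervalIntegral.integral_mono_on hm2 hKint2 (hgint (t - 1)) hb2
        rw [hcomp (t - 1) hm2] at h3
        have h4 : t - (t - 1) = (1:ℝ) := by ring
        rw [h4, Real.one_rpow, mul_one] at h3
        exact h3
      refine ⟨by rw [hsplit]; linarith, fun hlt => absurd hlt (by linarith)⟩
  -- package the inner integral as a measurable function of `t`
  set F : ℝ × ℝ → ℝ :=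
    Set.indicator {q : ℝ × ℝ | a < q.2 ∧ q.2 ≤ q.1} (fun q => K q.1 q.2) with hFdef
  have hFm : Measurable F := by
    apply Measurable.indicator hKm
    exact (measurableSet_lt measurable_const measurable_snd).inter
      (measurableSet_le measurable_snd measurable_fst)
  set J : ℝ → ℝ := fun t => ∫ τ, F (t, τ) with hJdef
  have hJsm : StronglyMeasurable J := hFm.stronglyMeasurable.integral_prod_right'
  have hJeq : ∀ t, a ≤ t → J t = ∫ τ in a..t, K t τ := by
    intro t hat
    rw [intervalIntegral.integral_of_le hat, ← MeasureTheory.integral_indicator measurableSet_Ioc]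
    simp only [hJdef]
    refine integral_congr_ae (ae_of_all _ fun τ => ?_)
    simp [hFdef, Set.indicator_apply, Set.mem_Ioc]
  -- rewrite the LHS
  have hLHS : (∫ t in a..b, ∫ τ in a..t, (t - τ) ^ (α t τ - 1) / Real.Gamma (α t τ))
      = ∫ t in a..b, J t := by
    apply intervalIntegral.integral_congr
    intro t ht
    rw [uIcc_of_le hab.le] at ht
    rw [hJeq t ht.1]
    apply intervalIntegral.integral_congr
    intro τ hτ
    rw [uIcc_of_le ht.1] at hτ
    exact hKeq t ht τ hτ
  -- bounds for J
  set B : ℝ → ℝ := fun t => t - a + (n:ℝ) - 1 with hBdef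
  have hJ0 : ∀ t ∈ Ioc a b, 0 ≤ J t := by
    intro t ht
    rw [hJeq t ht.1.le]
    apply intervalIntegral.integral_nonneg ht.1.le
    intro τ hτ
    exact hK0 t ⟨ht.1.le, ht.2⟩ τ ⟨hτ.1, hτ.2.trans ht.2⟩
  have hJle : ∀ t ∈ Ioc a b, J t ≤ B t := by
    intro t ht
    rw [hJeq t ht.1.le]
    exact (key t ht).1
  have hJlt : ∀ t ∈ Ioo a (min b (a + 1)), J t < B t := by
    intro t ht
    have ht' : t ∈ Ioc a b := ⟨ht.1, (lt_of_lt_of_le ht.2 (min_le_left _ _)).le⟩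
    rw [hJeq t ht'.1.le]
    exact (key t ht').2 (lt_of_lt_of_le ht.2 (min_le_right _ _))
  -- integrability on Ioc a b
  have hBon : IntegrableOn B (Ioc a b) volume := by
    apply Continuous.integrableOn_Ioc
    simp only [hBdef]
    fun_prop
  have hJon : IntegrableOn J (Ioc a b) volume := by
    apply MeasureTheory.Integrable.mono' (g := fun _ => b - a + (n:ℝ))
      ((integrableOn_const_iff (C := b - a + (n:ℝ))).mpr (Or.inr measure_Ioc_lt_top))
      hJsm.aestronglyMeasurable
    refine (ae_restrict_iff' measurableSet_Ioc).mpr (ae_of_all _ fun t ht => ?_)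
    rw [Real.norm_eq_abs, abs_of_nonneg (hJ0 t ht)]
    have := hJle t ht
    simp only [hBdef] at this
    have := ht.2
    linarith [hJle t ht, ht.2, ht.1]
  -- strict inequality of the integrals over Ioc a b
  have hpos : 0 < ∫ t in Ioc a b, (B t - J t) := by
    rw [setIntegral_pos_iff_support_of_nonneg_ae]
    · apply lt_of_lt_of_le _ (measure_mono
        (show Ioo a (min b (a + 1)) ⊆ Function.support (fun t => B t - J t) ∩ Ioc a b from ?_))
      · rw [Real.volume_Ioo]
        apply ENNReal.ofReal_pos.mpr
        have : a < min b (a + 1) := lt_min hab (by linarith)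
        linarith
      · intro t ht
        refine ⟨?_, ht.1, (lt_of_lt_of_le ht.2 (min_le_left _ _)).le⟩
        exact ne_of_gt (sub_pos.mpr (hJlt t ht))
    · exact (ae_restrict_iff' measurableSet_Ioc).mpr
        (ae_of_all _ fun t ht => sub_nonneg.mpr (hJle t ht))
    · exact hBon.sub hJon
  rw [MeasureTheory.integral_sub hBon hJon] at hpos
  -- value of the integral of B
  have hBval : (∫ t in a..b, B t) = (b - a) * ((b + a) / 2 - 1 + (n:ℝ) - a) := by
    have hBeq : ∀ t ∈ uIcc a b, B t = t + ((n:ℝ) - 1 - a) := by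
      intro t _; simp only [hBdef]; ring
    rw [intervalIntegral.integral_congr hBeq,
      intervalIntegral.integral_add (continuous_id'.intervalIntegrable _ _)
        (intervalIntegrable_const), integral_id, intervalIntegral.integral_const,
      smul_eq_mul]
    ring
  rw [hLHS, ← hBval, intervalIntegral.integral_of_le hab.le,
    show (∫ t in a..b, B t) = ∫ t in Ioc a b, B t from intervalIntegral.integral_of_le hab.le]
  linarith
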